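/- In the structure monoid M of a finite RC-quasigroup (X, ⊳) of size n, for any x ≠ y in X, the element x(x ⊳ y) = y(y ⊳ x) is the right-lcm (least common right-multiple) of x and y in M with respect to left-divisibility. -/

import Mathlib

/-- The defining relations `x(x ⊳ y) = y(y ⊳ x)` of the structure monoid of `(X, ⊳)`. -/
def structRels {X : Type*} (op : X → X → X) : FreeMonoid X → FreeMonoid X → Prop :=
  fun a b => ∃ x y : X,
    a = FreeMonoid.of x * FreeMonoid.of (op x y) ∧ b = FreeMonoid.of y * FreeMonoid.of (op y x)

namespace Stmt7Aux

open FreeMonoid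

set_option linter.unusedSectionVars false

variable {X : Type*} [DecidableEq X] (op : X → X → X)

/-- Left-division of the word `w` by the generator `x`: returns `some t` with
`w ≡ x * t` when `x` left-divides `w`. -/
def divW (x : X) : List X → Option (List X)
  | [] => none
  | z :: rest => if x = z then some rest else (divW (op z x) rest).map (fun t => op x z :: t)

local notation "C" => conGen (structRels op)

/-- relation with context -/
lemma rel_ctx (p s : List X) (a b : X) :
    C (ofList (p ++ a :: op a b :: s)) (ofList (p ++ b :: op b a :: s)) := by
  have h0 : C (ofList [a, op a b]) (ofList [b, op b a]) :=
    ConGen.Rel.of _ _ ⟨a, b, rfl, rfl⟩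
  have h := (conGen (structRels op)).mul
    ((conGen (structRels op)).mul ((conGen (structRels op)).refl (ofList p)) h0)
    ((conGen (structRels op)).refl (ofList s))
  have e1 : ofList (p ++ a :: op a b :: s) = ofList p * ofList [a, op a b] * ofList s := by
    rw [show p ++ a :: op a b :: s = p ++ [a, op a b] ++ s by simp, ofList_append, ofList_append]
  have e2 : ofList (p ++ b :: op b a :: s) = ofList p * ofList [b, op b a] * ofList s := by
    rw [show p ++ b :: op b a :: s = p ++ [b, op b a] ++ s by simp, ofList_append, ofList_append]
  rw [e1, e2]; exact h

/-- Option-level relation. -/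
def ORel (o₁ o₂ : Option (List X)) : Prop :=
  (o₁ = none ∧ o₂ = none) ∨ ∃ u v, o₁ = some u ∧ o₂ = some v ∧ C (ofList u) (ofList v)

lemma ORel.refl (o : Option (List X)) : ORel op o o := by
  cases o with
  | none => exact Or.inl ⟨rfl, rfl⟩
  | some u => exact Or.inr ⟨u, u, rfl, rfl, (conGen (structRels op)).refl _⟩

lemma ORel.symm {o₁ o₂} (h : ORel op o₁ o₂) : ORel op o₂ o₁ := by
  rcases h with ⟨h1, h2⟩ | ⟨u, v, h1, h2, h3⟩
  · exact Or.inl ⟨h2, h1⟩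
  · exact Or.inr ⟨v, u, h2, h1, (conGen (structRels op)).symm h3⟩

lemma ORel.trans {o₁ o₂ o₃} (h : ORel op o₁ o₂) (h' : ORel op o₂ o₃) : ORel op o₁ o₃ := by
  rcases h with ⟨h1, h2⟩ | ⟨u, v, h1, h2, h3⟩
  · rcases h' with ⟨g1, g2⟩ | ⟨u', v', g1, g2, g3⟩
    · exact Or.inl ⟨h1, g2⟩
    · rw [h2] at g1; exact absurd g1 (by simp)
  · rcases h' with ⟨g1, g2⟩ | ⟨u', v', g1, g2, g3⟩
    · rw [h2] at g1; exact absurd g1 (by simp)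
    · rw [h2] at g1; injection g1 with g1; subst g1
      exact Or.inr ⟨u, v', h1, g2, (conGen (structRels op)).trans h3 g3⟩

lemma ORel.map_cons {o₁ o₂} (z : X) (h : ORel op o₁ o₂) :
    ORel op (o₁.map (fun t => z :: t)) (o₂.map (fun t => z :: t)) := by
  rcases h with ⟨h1, h2⟩ | ⟨u, v, h1, h2, h3⟩
  · subst h1; subst h2; exact Or.inl ⟨rfl, rfl⟩
  · subst h1; subst h2
    refine Or.inr ⟨z :: u, z :: v, rfl, rfl, ?_⟩
    have : C (of z * ofList u) (of z * ofList v) :=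
      (conGen (structRels op)).mul ((conGen (structRels op)).refl (of z)) h3
    exact this

/-- One elementary rewriting step in context. -/
def OneStep (w₁ w₂ : FreeMonoid X) : Prop :=
  ∃ (p s : List X) (a b : X),
    w₁ = ofList (p ++ a :: op a b :: s) ∧ w₂ = ofList (p ++ b :: op b a :: s)

lemma oneStep_mul_right {w₁ w₂ : FreeMonoid X} (c : FreeMonoid X) (h : OneStep op w₁ w₂) :
    OneStep op (w₁ * c) (w₂ * c) := by
  obtain ⟨p, s, a, b, h1, h2⟩ := h
  refine ⟨p, s ++ toList c, a, b, ?_, ?_⟩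
  · rw [h1]; show ofList ((p ++ a :: op a b :: s) ++ toList c) = _
    simp [List.append_assoc]
  · rw [h2]; show ofList ((p ++ b :: op b a :: s) ++ toList c) = _
    simp [List.append_assoc]

lemma oneStep_mul_left {w₁ w₂ : FreeMonoid X} (c : FreeMonoid X) (h : OneStep op w₁ w₂) :
    OneStep op (c * w₁) (c * w₂) := by
  obtain ⟨p, s, a, b, h1, h2⟩ := h
  refine ⟨toList c ++ p, s, a, b, ?_, ?_⟩
  · rw [h1]; show ofList (toList c ++ (p ++ a :: op a b :: s)) = _
    simp [List.append_assoc]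
  · rw [h2]; show ofList (toList c ++ (p ++ b :: op b a :: s)) = _
    simp [List.append_assoc]

lemma eqvGen_mul_right {w₁ w₂ : FreeMonoid X} (c : FreeMonoid X)
    (h : Relation.EqvGen (OneStep op) w₁ w₂) : Relation.EqvGen (OneStep op) (w₁ * c) (w₂ * c) := by
  induction h with
  | rel a b hab => exact Relation.EqvGen.rel _ _ (oneStep_mul_right op c hab)
  | refl a => exact Relation.EqvGen.refl _
  | symm a b _ ih => exact Relation.EqvGen.symm _ _ ih
  | trans a b d _ _ ih1 ih2 => exact Relation.EqvGen.trans _ _ _ ih1 ih2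

lemma eqvGen_mul_left {w₁ w₂ : FreeMonoid X} (c : FreeMonoid X)
    (h : Relation.EqvGen (OneStep op) w₁ w₂) : Relation.EqvGen (OneStep op) (c * w₁) (c * w₂) := by
  induction h with
  | rel a b hab => exact Relation.EqvGen.rel _ _ (oneStep_mul_left op c hab)
  | refl a => exact Relation.EqvGen.refl _
  | symm a b _ ih => exact Relation.EqvGen.symm _ _ ih
  | trans a b d _ _ ih1 ih2 => exact Relation.EqvGen.trans _ _ _ ih1 ih2

/-- The congruence generated by `structRels` is contained in the equivalence
generated by one-step rewrites. -/
lemma conGen_le_eqvGen {w₁ w₂ : FreeMonoid X} (h : C w₁ w₂) : Relation.EqvGen (OneStep op) w₁ w₂ := by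
  let D : Con (FreeMonoid X) :=
    { r := Relation.EqvGen (OneStep op)
      iseqv := Relation.EqvGen.is_equivalence _
      mul' := fun {a b c d} hab hcd =>
        Relation.EqvGen.trans _ _ _ (eqvGen_mul_right op c hab) (eqvGen_mul_left op b hcd) }
  have hle : conGen (structRels op) ≤ D := by
    apply Con.conGen_le.mpr
    rintro a b ⟨x, y, rfl, rfl⟩
    exact Relation.EqvGen.rel _ _ ⟨[], [], x, y, rfl, rfl⟩
  exact hle h

/-- Invariance of `divW` under a single rewriting step, anywhere in the word.
This is the critical-pair analysis, using the RC law and injectivity. -/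
lemma divW_onestep (hRC : ∀ x y z : X, op (op x y) (op x z) = op (op y x) (op y z))
    (hinj : ∀ a : X, Function.Injective (op a)) (a b : X) (s : List X) :
    ∀ (p : List X) (t : X),
      ORel op (divW op t (p ++ a :: op a b :: s)) (divW op t (p ++ b :: op b a :: s)) := by
  intro p
  induction p with
  | nil =>
    intro t
    by_cases hab : a = b
    · subst hab; exact ORel.refl op _
    by_cases hta : t = a
    · subst hta
      have e1 : divW op t (t :: op t b :: s) = some (op t b :: s) := by simp [divW]
      have e2 : divW op t (b :: op b t :: s) = some (op t b :: s) := by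
        simp [divW, hab]
      rw [List.nil_append, List.nil_append, e1, e2]
      exact Or.inr ⟨_, _, rfl, rfl, (conGen (structRels op)).refl _⟩
    by_cases htb : t = b
    · subst htb
      have e1 : divW op t (a :: op a t :: s) = some (op t a :: s) := by
        simp [divW, hta]
      have e2 : divW op t (t :: op t a :: s) = some (op t a :: s) := by simp [divW]
      rw [List.nil_append, List.nil_append, e1, e2]
      exact Or.inr ⟨_, _, rfl, rfl, (conGen (structRels op)).refl _⟩
    · have hne1 : op a t ≠ op a b := fun h => htb (hinj a h)
      have hne2 : op b t ≠ op b a := fun h => hta (hinj b h)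
      have e1 : divW op t (a :: op a b :: s)
          = (divW op (op (op a b) (op a t)) s).map
              (fun t' => op t a :: op (op a t) (op a b) :: t') := by
        simp [divW, hta, hne1, Option.map_map, Function.comp_def]
      have e2 : divW op t (b :: op b a :: s)
          = (divW op (op (op b a) (op b t)) s).map
              (fun t' => op t b :: op (op b t) (op b a) :: t') := by
        simp [divW, htb, hne2, Option.map_map, Function.comp_def]
      rw [List.nil_append, List.nil_append, e1, e2, hRC a b t]
      cases hdiv : divW op (op (op b a) (op b t)) s with
      | none => exact Or.inl ⟨rfl, rfl⟩
      | some t' =>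
        refine Or.inr ⟨_, _, rfl, rfl, ?_⟩
        have key := rel_ctx op [] t' (op t a) (op t b)
        rw [hRC t a b, hRC t b a] at key
        exact key
  | cons c p' ih =>
    intro t
    by_cases htc : t = c
    · subst htc
      have e1 : divW op t (t :: (p' ++ a :: op a b :: s)) = some (p' ++ a :: op a b :: s) := by
        simp [divW]
      have e2 : divW op t (t :: (p' ++ b :: op b a :: s)) = some (p' ++ b :: op b a :: s) := by
        simp [divW]
      rw [List.cons_append, List.cons_append, e1, e2]
      exact Or.inr ⟨_, _, rfl, rfl, rel_ctx op p' s a b⟩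
    · have e1 : divW op t (c :: (p' ++ a :: op a b :: s))
          = (divW op (op c t) (p' ++ a :: op a b :: s)).map (fun t' => op t c :: t') := by
        simp [divW, htc]
      have e2 : divW op t (c :: (p' ++ b :: op b a :: s))
          = (divW op (op c t) (p' ++ b :: op b a :: s)).map (fun t' => op t c :: t') := by
        simp [divW, htc]
      rw [List.cons_append, List.cons_append, e1, e2]
      exact ORel.map_cons op _ (ih (op c t))

/-- Invariance of `divW` under the congruence. -/
lemma divW_invariant (hRC : ∀ x y z : X, op (op x y) (op x z) = op (op y x) (op y z))
    (hinj : ∀ a : X, Function.Injective (op a)) {w₁ w₂ : FreeMonoid X}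
    (h : C w₁ w₂) (t : X) :
    ORel op (divW op t (toList w₁)) (divW op t (toList w₂)) := by
  have h' := conGen_le_eqvGen op h
  clear h
  induction h' with
  | rel a b hab =>
    obtain ⟨p, s, c, d, rfl, rfl⟩ := hab
    exact divW_onestep op hRC hinj c d s p t
  | refl a => exact ORel.refl op _
  | symm a b _ ih => exact ORel.symm op ih
  | trans a b c _ _ ih1 ih2 => exact ORel.trans op ih1 ih2

/-- Soundness of `divW`: if division succeeds, the quotient is a genuine witness. -/
lemma divW_sound : ∀ (w : List X) (t : X) (u : List X), divW op t w = some u →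
    C (ofList w) (of t * ofList u) := by
  intro w
  induction w with
  | nil => intro t u h; simp [divW] at h
  | cons z rest ih =>
    intro t u h
    by_cases htz : t = z
    · subst htz
      simp [divW] at h
      subst h
      exact (conGen (structRels op)).refl _
    · simp [divW, htz] at h
      obtain ⟨t', ht', rfl⟩ := h
      have h1 := ih (op z t) t' ht'
      have h2 : C (ofList (z :: rest)) (ofList (z :: op z t :: t')) := by
        have := (conGen (structRels op)).mul ((conGen (structRels op)).refl (of z)) h1
        exact this
      have h3 : C (ofList (z :: op z t :: t')) (ofList (t :: op t z :: t')) :=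
        rel_ctx op [] t' z t
      exact (conGen (structRels op)).trans h2 h3

end Stmt7Aux


open Stmt7Aux FreeMonoid in
/-- in the structure monoid of a finite RC-quasigroup `(X, ⊳)`, for `x ≠ y` in
`X`, the element `x(x ⊳ y) = y(y ⊳ x)` is the right-lcm of `x` and `y` with respect to
left-divisibility: it is a common right-multiple of `x` and `y`, and it left-divides every
common right-multiple of `x` and `y`. -/
theorem stmt7 {X : Type*} [Fintype X] [DecidableEq X] (op : X → X → X)
    (hRC : ∀ x y z : X, op (op x y) (op x z) = op (op y x) (op y z))
    (hL : ∀ x : X, Function.Bijective (op x))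
    (x y : X) (hxy : x ≠ y) :
    (PresentedMonoid.of (structRels op) x * PresentedMonoid.of (structRels op) (op x y)
        = PresentedMonoid.of (structRels op) y * PresentedMonoid.of (structRels op) (op y x)) ∧
    (∀ h : PresentedMonoid (structRels op),
      (∃ g, h = PresentedMonoid.of (structRels op) x * g) →
      (∃ g, h = PresentedMonoid.of (structRels op) y * g) →
      ∃ g, h = (PresentedMonoid.of (structRels op) x
        * PresentedMonoid.of (structRels op) (op x y)) * g) := by
  have hinj : ∀ a : X, Function.Injective (op a) := fun a => (hL a).injective
  constructor
  · exact Quotient.sound (ConGen.Rel.of _ _ ⟨x, y, rfl, rfl⟩)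
  · rintro h ⟨g₁, hg₁⟩ ⟨g₂, hg₂⟩
    obtain ⟨u, hu⟩ := PresentedMonoid.surjective_mk g₁
    obtain ⟨v, hv⟩ := PresentedMonoid.surjective_mk g₂
    have e1 : h = PresentedMonoid.mk (structRels op) (FreeMonoid.of x * u) := by
      rw [map_mul, hu]; exact hg₁
    have e2 : h = PresentedMonoid.mk (structRels op) (FreeMonoid.of y * v) := by
      rw [map_mul, hv]; exact hg₂
    have hC : (conGen (structRels op)) (FreeMonoid.of x * u) (FreeMonoid.of y * v) :=
      Quotient.exact (e1.symm.trans e2)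
    have hd := divW_invariant op hRC hinj hC y
    have h2 : divW op y (toList (FreeMonoid.of y * v)) = some (toList v) := by
      show divW op y (y :: toList v) = some (toList v)
      simp [divW]
    rcases hd with ⟨_, hn2⟩ | ⟨s, v', hs, _, _⟩
    · rw [hn2] at h2; exact absurd h2 (by simp)
    · have hs' : divW op y (x :: toList u) = some s := hs
      have hyx : y ≠ x := fun hh => hxy hh.symm
      rw [show divW op y (x :: toList u)
            = (divW op (op x y) (toList u)).map (fun t => op y x :: t) by
          simp [divW, hyx]] at hs'
      obtain ⟨t, ht, -⟩ := Option.map_eq_some_iff.mp hs'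
      have hC2 : (conGen (structRels op)) u (FreeMonoid.of (op x y) * ofList t) :=
        divW_sound op (toList u) (op x y) t ht
      refine ⟨PresentedMonoid.mk (structRels op) (ofList t), ?_⟩
      rw [e1]
      have step : PresentedMonoid.mk (structRels op) (FreeMonoid.of x * u)
          = PresentedMonoid.mk (structRels op)
              (FreeMonoid.of x * (FreeMonoid.of (op x y) * ofList t)) :=
        Quotient.sound ((conGen (structRels op)).mul
          ((conGen (structRels op)).refl (FreeMonoid.of x)) hC2)
      rw [step, map_mul, map_mul, mul_assoc]
      rfl
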